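/- arXiv:1807.01558 — 2 statements merged into one kernel-verified Lean document; each statement's English description precedes it below -/
import Mathlib

section
/- Let a_{11} ∈ ℂ and consider the operator L = ∂³ + x²∂² + a_{11}x∂ on ℂ[x], with eigenvalue λ(n) = n(n−1) + a_{11}n. Suppose {P_n} are monic eigenpolynomials L P_n = λ(n)P_n with expansion P_n(x) = x^n + Σ_{k≥1} p_k(n)x^{n−k}, and assume 2n + a_{11} − k − 1 ≠ 0 wherever needed so the coefficients are determined. Then p_k(n) = 0 whenever k is not divisible by 3, and p_3(n) = n(n−1)(n−2)/(6n + 3a_{11} − 12) whenever 6n + 3a_{11} − 12 ≠ 0. -/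
open Polynomial

theorem stmt_15 (a11 : ℂ) (n : ℕ) (P : ℂ[X]) (hm : P.Monic) (hdeg : P.natDegree = n)
    (hL : derivative (derivative (derivative P)) + X ^ 2 * derivative (derivative P)
        + C a11 * (X * derivative P)
      = ((n : ℂ) * ((n : ℂ) - 1) + a11 * (n : ℂ)) • P)
    (hreg : ∀ k : ℕ, 1 ≤ k → k ≤ n → 2 * (n : ℂ) + a11 - (k : ℂ) - 1 ≠ 0) :
    (∀ k : ℕ, k ≤ n → ¬(3 ∣ k) → P.coeff (n - k) = 0) ∧
    (3 ≤ n → 6 * (n : ℂ) + 3 * a11 - 12 ≠ 0 →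
      P.coeff (n - 3)
        = (n : ℂ) * ((n : ℂ) - 1) * ((n : ℂ) - 2) / (6 * (n : ℂ) + 3 * a11 - 12)) := by
  have key : ∀ m : ℕ,
      (((n : ℂ) * ((n : ℂ) - 1) + a11 * (n : ℂ)) - ((m : ℂ) * ((m : ℂ) - 1) + a11 * (m : ℂ)))
        * P.coeff m
      = ((m : ℂ) + 1) * ((m : ℂ) + 2) * ((m : ℂ) + 3) * P.coeff (m + 3) := by
    intro m
    have h := congrArg (fun q => q.coeff m) hL
    simp only [coeff_add, coeff_smul, smul_eq_mul] at h
    rw [show (X : ℂ[X]) ^ 2 * derivative (derivative P)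
        = derivative (derivative P) * X ^ 2 by ring,
      show (C a11 : ℂ[X]) * (X * derivative P) = derivative P * X ^ 1 * C a11 by ring] at h
    rw [coeff_derivative, coeff_derivative, coeff_derivative, coeff_mul_X_pow',
      coeff_mul_C, coeff_mul_X_pow'] at h
    match m with
    | 0 =>
      norm_num [coeff_derivative] at h ⊢
      linear_combination -h
    | 1 =>
      norm_num [coeff_derivative] at h ⊢
      linear_combination -h
    | (m + 2) =>
      norm_num [coeff_derivative] at h ⊢
      linear_combination -h
  have hcoeffn : P.coeff n = 1 := hdeg ▸ hm.coeff_natDegree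
  have htop : ∀ j, n < j → P.coeff j = 0 := fun j hj =>
    coeff_eq_zero_of_natDegree_lt (hdeg ▸ hj)
  -- the recursion in terms of k
  have hrec : ∀ k : ℕ, 1 ≤ k → k ≤ n →
      ((k : ℂ) * (2 * (n : ℂ) + a11 - (k : ℂ) - 1)) * P.coeff (n - k)
        = ((n : ℂ) - k + 1) * ((n : ℂ) - k + 2) * ((n : ℂ) - k + 3) * P.coeff (n - k + 3) := by
    intro k hk1 hkn
    have hc : ((n - k : ℕ) : ℂ) = (n : ℂ) - (k : ℂ) := by
      push_cast [Nat.cast_sub hkn]; ring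
    have h := key (n - k)
    rw [hc] at h
    rw [← h]; ring
  have hzero : ∀ k : ℕ, k ≤ n → ¬(3 ∣ k) → P.coeff (n - k) = 0 := by
    intro k
    induction k using Nat.strong_induction_on with
    | _ k ih =>
      intro hkn h3
      have hk1 : 1 ≤ k := by omega
      have hne : ((k : ℂ) * (2 * (n : ℂ) + a11 - (k : ℂ) - 1)) ≠ 0 :=
        mul_ne_zero (Nat.cast_ne_zero.mpr (by omega)) (hreg k hk1 hkn)
      have h := hrec k hk1 hkn
      have hz : P.coeff (n - k + 3) = 0 := by
        rcases Nat.lt_or_ge k 3 with hk3 | hk3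
        · exact htop _ (by omega)
        · have : n - k + 3 = n - (k - 3) := by omega
          rw [this]
          exact ih (k - 3) (by omega) (by omega) (by omega)
      rw [hz, mul_zero] at h
      exact (mul_eq_zero.mp h).resolve_left hne
  refine ⟨hzero, fun h3n hden => ?_⟩
  have h := hrec 3 (by omega) h3n
  have hz : n - 3 + 3 = n := by omega
  rw [hz, hcoeffn, mul_one] at h
  rw [eq_div_iff hden]
  push_cast at h
  linear_combination h
end

section
/- A sequence {P_n} of monic real polynomials satisfying the three-term recurrence x·P_n(x) = P_{n+1}(x) + u(n)P_n(x) + v(n)P_{n−1}(x) with real coefficients and v(n) > 0 for all n ≥ 1 (and P_{−1} = 0, P_0 = 1) consists entirely of real-rooted polynomials. -/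
open Polynomial

namespace Stmt18Aux

open Matrix

/-- The Jacobi matrix with diagonal `u` and off-diagonal `√(v)`. -/
noncomputable def J (u v : ℕ → ℝ) (n : ℕ) : Matrix (Fin n) (Fin n) ℝ :=
  Matrix.of fun i j =>
    if (i : ℕ) = j then u i
    else if (i : ℕ) + 1 = j then Real.sqrt (v j)
    else if (j : ℕ) + 1 = i then Real.sqrt (v i)
    else 0

lemma J_apply (u v : ℕ → ℝ) (n : ℕ) (i j : Fin n) :
    J u v n i j =
      if (i : ℕ) = j then u i
      else if (i : ℕ) + 1 = j then Real.sqrt (v j)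
      else if (j : ℕ) + 1 = i then Real.sqrt (v i)
      else 0 := rfl

lemma J_symm (u v : ℕ → ℝ) (n : ℕ) : (J u v n).IsHermitian := by
  ext i j
  simp only [conjTranspose_apply, J_apply, star_trivial]
  split_ifs <;> first | rfl | omega | (congr 1 <;> omega)

/-- Characteristic polynomial is invariant under conjugation. -/
lemma charpoly_conj {n : Type*} [Fintype n] [DecidableEq n] {R : Type*} [CommRing R]
    (B M N : Matrix n n R) (h1 : B * N = 1) (h2 : N * B = 1) :
    (B * M * N).charpoly = M.charpoly := by
  have hmap : ∀ (P Q : Matrix n n R),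
      (C : R →+* R[X]).mapMatrix (P * Q) =
        (C : R →+* R[X]).mapMatrix P * (C : R →+* R[X]).mapMatrix Q := fun P Q => by
    simp [_root_.map_mul]
  have key : charmatrix (B * M * N) =
      (C : R →+* R[X]).mapMatrix B * charmatrix M * (C : R →+* R[X]).mapMatrix N := by
    unfold charmatrix
    rw [mul_sub, sub_mul]
    congr 1
    · -- B * scalar X * N = scalar X
      have hc : Commute (Matrix.scalar n (X : R[X])) ((C : R →+* R[X]).mapMatrix N) :=
        Matrix.scalar_commute _ (fun r' => Commute.all _ _) _
      rw [mul_assoc, hc.eq, ← mul_assoc, ← hmap, h1]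
      simp
    · rw [hmap, hmap]
  have hdet : ((C : R →+* R[X]).mapMatrix B).det * ((C : R →+* R[X]).mapMatrix N).det = 1 := by
    rw [← det_mul, ← hmap, h1]; simp
  rw [Matrix.charpoly, Matrix.charpoly, key, det_mul, det_mul]
  ring_nf
  rw [mul_comm, ← mul_assoc, mul_comm _ ((C : R →+* R[X]).mapMatrix B).det, hdet, one_mul]

lemma splits_charpoly_of_isHermitian {n : ℕ} (A : Matrix (Fin n) (Fin n) ℝ)
    (hA : A.IsHermitian) : A.charpoly.Splits := by
  have hspec := hA.spectral_theorem
  set U : Matrix (Fin n) (Fin n) ℝ := (hA.eigenvectorUnitary : Matrix (Fin n) (Fin n) ℝ) with hU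
  have h1 : U * star U = 1 := (Matrix.mem_unitaryGroup_iff).mp hA.eigenvectorUnitary.2
  have h2 : star U * U = 1 := (Matrix.mem_unitaryGroup_iff').mp hA.eigenvectorUnitary.2
  have : A.charpoly = (Matrix.diagonal (RCLike.ofReal ∘ hA.eigenvalues)).charpoly := by
    conv_lhs => rw [hspec]
    exact charpoly_conj _ _ _ h1 h2
  rw [this, Matrix.charpoly_of_upperTriangular _ (Matrix.blockTriangular_diagonal _)]
  refine Polynomial.Splits.prod fun i _ => ?_
  exact Polynomial.Splits.X_sub_C _

lemma charmatrix_J_castSucc (u v : ℕ → ℝ) (m : ℕ) :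
    (charmatrix (J u v (m + 1))).submatrix Fin.castSucc Fin.castSucc
      = charmatrix (J u v m) := by
  ext i j
  simp only [submatrix_apply, charmatrix_apply, Matrix.diagonal_apply, J_apply,
    Fin.coe_castSucc, Fin.castSucc_inj]

lemma charpoly_J_zero (u v : ℕ → ℝ) : (J u v 0).charpoly = 1 := by
  rw [Matrix.charpoly, Matrix.det_fin_zero]

lemma charpoly_J_one (u v : ℕ → ℝ) : (J u v 1).charpoly = X - C (u 0) := by
  rw [Matrix.charpoly, Matrix.det_fin_one, charmatrix_apply_eq, J_apply]
  norm_num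

lemma charpoly_J_rec (u v : ℕ → ℝ) (n : ℕ) (hvnn : 0 ≤ v (n + 1)) :
    (J u v (n + 2)).charpoly
      = (X - C (u (n + 1))) * (J u v (n + 1)).charpoly
        - C (v (n + 1)) * (J u v n).charpoly := by
  set b : ℝ := Real.sqrt (v (n + 1)) with hb
  set M : Matrix (Fin (n + 2)) (Fin (n + 2)) ℝ[X] := charmatrix (J u v (n + 2)) with hM
  -- entries in the last row/column
  have hM0 : ∀ j : Fin n, M (Fin.last (n + 1)) (Fin.castSucc (Fin.castSucc j)) = 0 := by
    intro j
    have hjlt := j.isLt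
    have hne : (Fin.last (n + 1)) ≠ (Fin.castSucc (Fin.castSucc j)) := by
      simp only [Fin.ne_iff_vne, Fin.val_last, Fin.coe_castSucc]; omega
    rw [hM, charmatrix_apply_ne _ _ _ hne, J_apply]
    simp only [Fin.coe_castSucc, Fin.val_last]
    rw [if_neg (by omega), if_neg (by omega), if_neg (by omega)]
    simp
  have hM0' : ∀ j : Fin n, M (Fin.castSucc (Fin.castSucc j)) (Fin.last (n + 1)) = 0 := by
    intro j
    have hjlt := j.isLt
    have hne : (Fin.castSucc (Fin.castSucc j)) ≠ (Fin.last (n + 1)) := by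
      simp only [Fin.ne_iff_vne, Fin.val_last, Fin.coe_castSucc]; omega
    rw [hM, charmatrix_apply_ne _ _ _ hne, J_apply]
    simp only [Fin.coe_castSucc, Fin.val_last]
    rw [if_neg (by omega), if_neg (by omega), if_neg (by omega)]
    simp
  have hMll : M (Fin.last (n + 1)) (Fin.last (n + 1)) = X - C (u (n + 1)) := by
    rw [hM, charmatrix_apply_eq, J_apply]
    simp
  have hMln : M (Fin.last (n + 1)) (Fin.castSucc (Fin.last n)) = -C b := by
    have hne : (Fin.last (n + 1)) ≠ (Fin.castSucc (Fin.last n)) :=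
      (Fin.castSucc_lt_last (Fin.last n)).ne'
    rw [hM, charmatrix_apply_ne _ _ _ hne, J_apply]
    simp
    rw [if_neg (by omega), hb]
  have hMnl : M (Fin.castSucc (Fin.last n)) (Fin.last (n + 1)) = -C b := by
    have hne : (Fin.castSucc (Fin.last n)) ≠ (Fin.last (n + 1)) :=
      (Fin.castSucc_lt_last (Fin.last n)).ne
    rw [hM, charmatrix_apply_ne _ _ _ hne, J_apply]
    simp
    rw [hb]
  -- expansion along the last row
  have hexp := Matrix.det_succ_row M (Fin.last (n + 1))
  rw [Fin.sum_univ_castSucc, Fin.sum_univ_castSucc] at hexp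
  have hzero : ∀ j : Fin n,
      (-1 : ℝ[X]) ^ ((Fin.last (n + 1) : ℕ) + ((Fin.castSucc (Fin.castSucc j) : Fin (n+2)) : ℕ))
          * M (Fin.last (n + 1)) (Fin.castSucc (Fin.castSucc j))
          * Matrix.det (M.submatrix (Fin.last (n + 1)).succAbove
              ((Fin.castSucc (Fin.castSucc j)) : Fin (n+2)).succAbove) = 0 := by
    intro j
    rw [hM0 j]; ring
  rw [Finset.sum_congr rfl (fun j _ => hzero j), Finset.sum_const_zero, zero_add] at hexp
  -- the j = last term
  have hminor_last : M.submatrix (Fin.last (n + 1)).succAbove (Fin.last (n + 1)).succAbove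
      = charmatrix (J u v (n + 1)) := by
    rw [Fin.succAbove_last, hM, charmatrix_J_castSucc]
  -- the j = castSucc (last n) term : second expansion along the last column
  set M' : Matrix (Fin (n + 1)) (Fin (n + 1)) ℝ[X] :=
    M.submatrix (Fin.last (n + 1)).succAbove (Fin.castSucc (Fin.last n)).succAbove with hM'
  have hM'entry : ∀ i j, M' i j
      = M (Fin.castSucc i) ((Fin.castSucc (Fin.last n)).succAbove j) := by
    intro i j
    rw [hM', Matrix.submatrix_apply, Fin.succAbove_last]
  have hexp2 := Matrix.det_succ_column M' (Fin.last n)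
  rw [Fin.sum_univ_castSucc] at hexp2
  have hzero2 : ∀ i : Fin n,
      (-1 : ℝ[X]) ^ (((Fin.castSucc i : Fin (n+1)) : ℕ) + ((Fin.last n : ℕ)))
          * M' (Fin.castSucc i) (Fin.last n)
          * Matrix.det (M'.submatrix ((Fin.castSucc i) : Fin (n+1)).succAbove
              (Fin.last n).succAbove) = 0 := by
    intro i
    have : M' (Fin.castSucc i) (Fin.last n) = 0 := by
      rw [hM'entry, Fin.succAbove_castSucc_self, Fin.succ_last, hM0']
    rw [this]; ring
  rw [Finset.sum_congr rfl (fun i _ => hzero2 i), Finset.sum_const_zero, zero_add] at hexp2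
  have hM'll : M' (Fin.last n) (Fin.last n) = -C b := by
    rw [hM'entry, Fin.succAbove_castSucc_self, Fin.succ_last, hMnl]
  have hminor2 : M'.submatrix (Fin.last n).succAbove (Fin.last n).succAbove
      = charmatrix (J u v n) := by
    refine Matrix.ext fun i j => ?_
    show M' ((Fin.last n).succAbove i) ((Fin.last n).succAbove j) = _
    rw [Fin.succAbove_last]
    rw [hM'entry, Fin.succAbove_castSucc_of_lt _ _ (Fin.castSucc_lt_last j)]
    have h1 := congrFun (congrFun (charmatrix_J_castSucc u v (n + 1)) (Fin.castSucc i))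
      (Fin.castSucc j)
    rw [Matrix.submatrix_apply] at h1
    have h2 := congrFun (congrFun (charmatrix_J_castSucc u v n) i) j
    rw [Matrix.submatrix_apply] at h2
    rw [← hM] at h1
    rw [h1, h2]
  rw [hM'll, hminor2] at hexp2
  -- assemble
  rw [hMll, hMln, hminor_last, hexp2] at hexp
  have hcharp : (J u v (n + 2)).charpoly = Matrix.det M := rfl
  rw [hcharp, hexp]
  have hb2 : C b * C b = C (v (n + 1)) := by
    rw [← C_mul]
    congr 1
    rw [hb]
    exact Real.mul_self_sqrt hvnn
  have hsgn1 : (-1 : ℝ[X]) ^ ((Fin.last (n + 1) : ℕ)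
      + ((Fin.castSucc (Fin.last n) : Fin (n+2)) : ℕ)) = -1 := by
    simp only [Fin.val_last, Fin.coe_castSucc]
    have : (n + 1) + n = 2 * n + 1 := by ring
    rw [this, pow_succ, pow_mul]
    norm_num
  have hsgn2 : (-1 : ℝ[X]) ^ ((Fin.last (n + 1) : ℕ) + ((Fin.last (n + 1) : ℕ))) = 1 := by
    simp only [Fin.val_last]
    have : (n + 1) + (n + 1) = 2 * (n + 1) := by ring
    rw [this, pow_mul]
    norm_num
  have hsgn3 : (-1 : ℝ[X]) ^ (((Fin.last n : ℕ)) + ((Fin.last n : ℕ))) = 1 := by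
    simp only [Fin.val_last]
    have : n + n = 2 * n := by ring
    rw [this, pow_mul]
    norm_num
  rw [hsgn1, hsgn2, hsgn3]
  have : (J u v (n + 1)).charpoly = (charmatrix (J u v (n + 1))).det := rfl
  rw [this]
  have : (J u v n).charpoly = (charmatrix (J u v n)).det := rfl
  rw [this]
  rw [← hb2]
  ring

end Stmt18Aux

theorem stmt_18 (u v : ℕ → ℝ) (hv : ∀ n : ℕ, 1 ≤ n → 0 < v n)
    (P : ℕ → Polynomial ℝ) (h0 : P 0 = 1)
    (hrec0 : X * P 0 = P 1 + C (u 0) * P 0)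
    (hrec : ∀ n : ℕ,
      X * P (n + 1) = P (n + 2) + C (u (n + 1)) * P (n + 1) + C (v (n + 1)) * P n) :
    ∀ n : ℕ, (P n).Splits := by
  have key : ∀ n : ℕ, P n = (Stmt18Aux.J u v n).charpoly
      ∧ P (n + 1) = (Stmt18Aux.J u v (n + 1)).charpoly := by
    intro n
    induction n with
    | zero =>
      constructor
      · rw [h0, Stmt18Aux.charpoly_J_zero]
      · have h1 : P 1 = X - C (u 0) := by
          have := hrec0
          rw [h0] at this
          linear_combination -this
        rw [h1, Stmt18Aux.charpoly_J_one]
    | succ n ih =>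
      refine ⟨ih.2, ?_⟩
      have h2 : P (n + 2) = X * P (n + 1) - C (u (n + 1)) * P (n + 1) - C (v (n + 1)) * P n := by
        linear_combination -hrec n
      rw [h2, ih.1, ih.2, Stmt18Aux.charpoly_J_rec u v n (le_of_lt (hv (n + 1) (by omega)))]
      ring
  intro n
  rw [(key n).1]
  exact Stmt18Aux.splits_charpoly_of_isHermitian _ (Stmt18Aux.J_symm u v n)
end
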